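/- arXiv:2111.10632 — 5 statements merged into one kernel-verified Lean document; each statement's English description precedes it below -/
import Mathlib

section
/- Let ξ ∈ S¹ ⊂ ℂ and let r(t) be a complex Laurent polynomial with r(ξ) ≠ 0. If the Laurent polynomial (t⁻¹ - conj(ξ))·r(t) is symmetric (i.e. equal to its image under the involution sending t ↦ t⁻¹ and conjugating coefficients), then Re(conj(ξ)·r(ξ)) = 0. -/
open LaurentPolynomial Complex

/-- The involution `#` on complex Laurent polynomials: `t ↦ t⁻¹` together with complex
conjugation of the coefficients. -/
noncomputable def lstar (p : LaurentPolynomial ℂ) : LaurentPolynomial ℂ :=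
  AddMonoidAlgebra.ofCoeff
    (Finsupp.mapRange (starRingEnd ℂ) (map_zero _) (LaurentPolynomial.invert p).coeff)

/-- Evaluation of a complex Laurent polynomial at a (nonzero) complex number. -/
noncomputable def leval (ω : ℂ) (p : LaurentPolynomial ℂ) : ℂ :=
  Finsupp.sum p.coeff fun n a => a * ω ^ n

lemma lstar_apply (p : LaurentPolynomial ℂ) (n : ℤ) :
    (lstar p).coeff n = (starRingEnd ℂ) (p.coeff (-n)) := by
  simp [lstar, Finsupp.mapRange_apply, AddMonoidAlgebra.coeff_ofCoeff]

lemma lstar_zero : lstar 0 = 0 := by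
  ext n; simp [lstar_apply]

lemma lstar_add (p q : LaurentPolynomial ℂ) : lstar (p + q) = lstar p + lstar q := by
  unfold lstar
  rw [map_add, AddMonoidAlgebra.coeff_add, Finsupp.mapRange_add (map_add _)]; rfl

lemma lstar_neg (p : LaurentPolynomial ℂ) : lstar (-p) = -(lstar p) := by
  have h := lstar_add p (-p)
  rw [add_neg_cancel, lstar_zero] at h
  exact (neg_eq_of_add_eq_zero_right h.symm).symm

lemma lstar_single (n : ℤ) (a : ℂ) :
    lstar (AddMonoidAlgebra.single n a) = AddMonoidAlgebra.single (-n) ((starRingEnd ℂ) a) := by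
  ext m
  rw [lstar_apply, AddMonoidAlgebra.coeff_single_apply, AddMonoidAlgebra.coeff_single_apply]
  rcases eq_or_ne n (-m) with h | h
  · rw [if_pos h, if_pos (by omega)]
  · rw [if_neg h, if_neg (by omega), map_zero]

lemma lstar_mul (p q : LaurentPolynomial ℂ) : lstar (p * q) = lstar p * lstar q := by
  induction p using AddMonoidAlgebra.induction_linear with
  | zero => simp [lstar_zero]
  | add f g hf hg => rw [add_mul, lstar_add, lstar_add, hf, hg, add_mul]
  | single n a =>
    induction q using AddMonoidAlgebra.induction_linear with
    | zero => simp [lstar_zero]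
    | add f g hf hg => rw [mul_add, lstar_add, lstar_add, hf, hg, mul_add]
    | single m b =>
      show lstar (AddMonoidAlgebra.single n a * AddMonoidAlgebra.single m b) = _
      rw [AddMonoidAlgebra.single_mul_single, lstar_single, lstar_single, lstar_single]
      show _ = AddMonoidAlgebra.single _ _ * AddMonoidAlgebra.single _ _
      rw [AddMonoidAlgebra.single_mul_single, map_mul, neg_add]

lemma leval_add (ω : ℂ) (p q : LaurentPolynomial ℂ) :
    leval ω (p + q) = leval ω p + leval ω q := by
  unfold _root_.leval
  rw [AddMonoidAlgebra.coeff_add]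
  exact Finsupp.sum_add_index' (fun n => zero_mul _) (fun n a b => add_mul a b _)

lemma leval_single (ω : ℂ) (n : ℤ) (a : ℂ) :
    leval ω (AddMonoidAlgebra.single n a) = a * ω ^ n := by
  unfold _root_.leval
  exact Finsupp.sum_single_index (zero_mul _)

lemma leval_lstar (ξ : ℂ) (h : (starRingEnd ℂ) ξ = ξ⁻¹) (p : LaurentPolynomial ℂ) :
    leval ξ (lstar p) = (starRingEnd ℂ) (leval ξ p) := by
  induction p using AddMonoidAlgebra.induction_linear with
  | zero => simp [lstar_zero, _root_.leval]
  | add f g hf hg => rw [lstar_add, leval_add, leval_add, hf, hg, map_add]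
  | single n a =>
    rw [lstar_single, leval_single, leval_single, map_mul, map_zpow₀, h, inv_zpow, ← zpow_neg]

/-- `leval` at a unit, as an algebra homomorphism. -/
noncomputable def levalHom (u : ℂˣ) : LaurentPolynomial ℂ →ₐ[ℂ] ℂ :=
  AddMonoidAlgebra.lift ℂ ℂ ℤ ((Units.coeHom ℂ).comp (zpowersHom ℂˣ u))

lemma leval_eq_levalHom (u : ℂˣ) (p : LaurentPolynomial ℂ) :
    leval (u : ℂ) p = levalHom u p := by
  rw [levalHom, AddMonoidAlgebra.lift_apply]
  refine Finsupp.sum_congr fun n _ => ?_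
  simp [smul_eq_mul, Units.val_zpow_eq_zpow_val]

/-- If `ξ ∈ S¹`, `r` is a Laurent polynomial with `r(ξ) ≠ 0` and `(t⁻¹ - conj ξ) * r(t)`
is symmetric, then `Re(conj ξ · r(ξ)) = 0`. -/
theorem re_conj_xi_mul_eval_eq_zero (ξ : ℂ) (hξ : ‖ξ‖ = 1)
    (r : LaurentPolynomial ℂ) (hr : leval ξ r ≠ 0)
    (hsym : lstar ((T (-1) - C (starRingEnd ℂ ξ)) * r) = (T (-1) - C (starRingEnd ℂ ξ)) * r) :
    ((starRingEnd ℂ ξ) * leval ξ r).re = 0 := by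
  have hξ0 : ξ ≠ 0 := by
    intro h; rw [h] at hξ; simp at hξ
  set ξc := (starRingEnd ℂ) ξ with hξc
  have hmul : ξc * ξ = 1 := by
    rw [hξc, mul_comm, Complex.mul_conj, Complex.normSq_eq_norm_sq, hξ]; norm_num
  have hinv : ξc = ξ⁻¹ := eq_inv_of_mul_eq_one_left hmul
  -- rewrite the symmetry hypothesis
  have hTC : lstar (T (-1) - C ξc) = T 1 - C ξ := by
    rw [sub_eq_add_neg, lstar_add, lstar_neg]
    show lstar (AddMonoidAlgebra.single (-1) 1) + -lstar (AddMonoidAlgebra.single 0 ξc)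
        = AddMonoidAlgebra.single 1 1 - AddMonoidAlgebra.single 0 ξ
    rw [lstar_single, lstar_single, map_one, hξc, Complex.conj_conj]
    rw [neg_neg, neg_zero, sub_eq_add_neg]
  have hsym' : (T 1 - C ξ) * lstar r = (T (-1) - C ξc) * r := by
    rw [← hTC, ← lstar_mul]; exact hsym
  have h1 : (T 1 : LaurentPolynomial ℂ) * T (-1) = 1 := by
    rw [← T_add]; norm_num
  have h2 : (C ξc : LaurentPolynomial ℂ) * C ξ = 1 := by
    rw [← map_mul, hmul, map_one]
  have key : (T 1 - C ξ) * (T 1 * lstar r + C ξc * r) = 0 := by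
    linear_combination (T 1 : LaurentPolynomial ℂ) * hsym' + r * h1 - r * h2
  have hT : (T 1 - C ξ : LaurentPolynomial ℂ) ≠ 0 := by
    intro h
    have he : (T 1 : LaurentPolynomial ℂ) = C ξ := sub_eq_zero.mp h
    have h5 : (T 1 : LaurentPolynomial ℂ).coeff 1 = (C ξ : LaurentPolynomial ℂ).coeff 1 := by rw [he]
    rw [show (T 1 : LaurentPolynomial ℂ) = AddMonoidAlgebra.single 1 1 from rfl,
      show (C ξ : LaurentPolynomial ℂ) = AddMonoidAlgebra.single 0 ξ from rfl,
      AddMonoidAlgebra.coeff_single_apply, AddMonoidAlgebra.coeff_single_apply] at h5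
    norm_num at h5
  have hzero : T 1 * lstar r + C ξc * r = 0 :=
    (mul_eq_zero.mp key).resolve_left hT
  -- evaluate at ξ
  set u : ℂˣ := Units.mk0 ξ hξ0 with hu
  have huv : (u : ℂ) = ξ := rfl
  have hev : ∀ p q : LaurentPolynomial ℂ, leval ξ (p * q) = leval ξ p * leval ξ q := by
    intro p q
    rw [← huv, leval_eq_levalHom, leval_eq_levalHom, leval_eq_levalHom, map_mul]
  have hevzero : leval ξ (T 1 * lstar r + C ξc * r) = 0 := by
    rw [hzero]; simp [_root_.leval]
  rw [leval_add, hev, hev] at hevzero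
  have hT1 : leval ξ (T 1) = ξ := by
    rw [show (T 1 : LaurentPolynomial ℂ) = AddMonoidAlgebra.single 1 1 from rfl, leval_single]
    simp
  have hC : leval ξ (C ξc) = ξc := by
    rw [show (C ξc : LaurentPolynomial ℂ) = AddMonoidAlgebra.single 0 ξc from rfl, leval_single]
    simp
  have hls : leval ξ (lstar r) = (starRingEnd ℂ) (leval ξ r) :=
    leval_lstar ξ (by rw [← hξc, hinv]) r
  rw [hT1, hC, hls] at hevzero
  set z := leval ξ r
  have hsum : ξc * z + (starRingEnd ℂ) (ξc * z) = 0 := by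
    rw [map_mul, hξc, Complex.conj_conj]
    linear_combination hevzero
  rw [Complex.add_conj] at hsum
  have : (2 * (ξc * z).re : ℝ) = 0 := by exact_mod_cast hsum
  linarith
end

section
/- Let ξ = 1 or ξ = -1 and let n be an odd positive integer. Then the cyclic module M = ℝ[t^{±1}]/((t-ξ)ⁿ) does not support any non-degenerate sesquilinear Hermitian linking form λ : M × M → ℝ(t)/ℝ[t^{±1}]. Equivalently: there is no Laurent polynomial r ∈ ℝ[t^{±1}] coprime to (t-ξ) such that r/(t-ξ)ⁿ is symmetric in ℝ(t)/ℝ[t^{±1}]. -/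
open LaurentPolynomial

/-- The involution `#` on real Laurent polynomials, sending `t` to `t⁻¹`. -/
noncomputable def lstarR (p : LaurentPolynomial ℝ) : LaurentPolynomial ℝ :=
  LaurentPolynomial.invert p

/-- Evaluation of a real Laurent polynomial at a unit `u`. -/
noncomputable def evalT (u : ℝˣ) : LaurentPolynomial ℝ →ₐ[ℝ] ℝ :=
  AddMonoidAlgebra.lift ℝ ℝ ℤ ((Units.coeHom ℝ).comp (zpowersHom ℝˣ u))

lemma evalT_T (u : ℝˣ) (a : ℤ) : evalT u (T a) = ((u ^ a : ℝˣ) : ℝ) := by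
  have h : (T a : LaurentPolynomial ℝ) = AddMonoidAlgebra.single a 1 := rfl
  rw [h, evalT, AddMonoidAlgebra.lift_single]
  simp [zpowersHom_apply]

lemma evalT_C (u : ℝˣ) (a : ℝ) : evalT u (C a) = a := by
  rw [C_eq_algebraMap]; exact (evalT u).commutes a

lemma evalT_toLaurent (u : ℝˣ) (p : Polynomial ℝ) :
    evalT u (Polynomial.toLaurent p) = p.eval (u : ℝ) := by
  have h : (evalT u).comp Polynomial.toLaurentAlg = Polynomial.aeval ((u : ℝ)) := by
    apply Polynomial.algHom_ext
    simp [Polynomial.toLaurentAlg_apply, Polynomial.toLaurent_X, evalT_T]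
  have := DFunLike.congr_fun h p
  simpa [Polynomial.toLaurentAlg_apply] using this

lemma evalT_invert (u : ℝˣ) (hu : u⁻¹ = u) (p : LaurentPolynomial ℝ) :
    evalT u (invert p) = evalT u p := by
  have h : (evalT u).comp (invert : LaurentPolynomial ℝ ≃ₐ[ℝ] _).toAlgHom = evalT u := by
    refine AddMonoidAlgebra.algHom_ext ?_ (Subsingleton.elim _ _)
    intro a
    have hsingle : (AddMonoidAlgebra.single a (1 : ℝ)) = (T a : LaurentPolynomial ℝ) := rfl
    simp only [AlgHom.comp_apply, AlgEquiv.toAlgHom_eq_coe, AlgHom.coe_coe, AlgEquiv.coe_algHom, hsingle,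
      invert_T, evalT_T]
    rw [zpow_neg, ← inv_zpow, hu]
  exact DFunLike.congr_fun h p

/-- For `ξ = ±1` and `n` odd, the cyclic module `ℝ[t^{±1}]/(t-ξ)ⁿ` supports no
non-degenerate linking form.  Equivalently: there is no Laurent polynomial `r`
coprime to `t - ξ` such that `r/(t-ξ)ⁿ` is symmetric in `ℝ(t)/ℝ[t^{±1}]`, where the
symmetry condition `r#/(t⁻¹-ξ)ⁿ ≡ r/(t-ξ)ⁿ mod ℝ[t^{±1}]` is expressed after clearing
denominators. -/
theorem no_nondegenerate_form_on_odd_cyclic_at_pm_one (ξ : ℝ) (hξ : ξ = 1 ∨ ξ = -1)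
    (n : ℕ) (hodd : Odd n) (hpos : 0 < n) :
    ¬ ∃ r : LaurentPolynomial ℝ, ¬ ((T 1 - C ξ) ∣ r) ∧
      ∃ g : LaurentPolynomial ℝ,
        lstarR r * (T 1 - C ξ) ^ n
          = r * (T (-1) - C ξ) ^ n + g * ((T 1 - C ξ) ^ n * (T (-1) - C ξ) ^ n) := by
  rintro ⟨r, hr, g, heq⟩
  have hsq : ξ * ξ = 1 := by rcases hξ with h | h <;> simp [h]
  have hne : ξ ≠ 0 := by rcases hξ with h | h <;> norm_num [h]
  set u : ℝˣ := Units.mk0 ξ hne with hu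
  have hucoe : (u : ℝ) = ξ := rfl
  have huinv : u⁻¹ = u := by
    ext
    rw [Units.val_inv_eq_inv_val, hucoe]
    field_simp
    nlinarith [hsq]
  -- rewrite T(-1) - C ξ
  have hB : (T (-1) - C ξ : LaurentPolynomial ℝ) = C (-ξ) * T (-1) * (T 1 - C ξ) := by
    symm
    have h1 : (T (-1) : LaurentPolynomial ℝ) * T 1 = 1 := by
      rw [← T_add]; norm_num [T_zero]
    have h3 : -ξ * ξ = -1 := by rw [neg_mul, hsq]
    calc C (-ξ) * T (-1) * (T 1 - C ξ : LaurentPolynomial ℝ)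
        = C (-ξ) * (T (-1) * T 1) - C (-ξ) * C ξ * T (-1) := by ring
      _ = C (-ξ) * 1 - C (-ξ * ξ) * T (-1) := by rw [h1, ← map_mul]
      _ = T (-1) - C ξ := by rw [h3, map_neg, map_neg, map_one]; ring
  have hA0 : (T 1 - C ξ : LaurentPolynomial ℝ) ≠ 0 := by
    intro h
    have h1 : ((T 1 - C ξ : LaurentPolynomial ℝ)).coeff 1 = 1 := by
      rw [AddMonoidAlgebra.coeff_sub, Finsupp.sub_apply]; simp
    rw [h] at h1
    simp at h1
  have hAn0 : ((T 1 - C ξ : LaurentPolynomial ℝ)) ^ n ≠ 0 := pow_ne_zero _ hA0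
  have hBn : (T (-1) - C ξ : LaurentPolynomial ℝ) ^ n
      = C (-ξ) ^ n * T (-1) ^ n * (T 1 - C ξ) ^ n := by
    rw [hB, mul_pow, mul_pow]
  -- cancel (T 1 - C ξ)^n
  have heq' : invert r * (T 1 - C ξ) ^ n
      = r * (T (-1) - C ξ) ^ n + g * ((T 1 - C ξ) ^ n * (T (-1) - C ξ) ^ n) := heq
  have heq2 : invert r = (r + g * (T 1 - C ξ) ^ n) * (C (-ξ) ^ n * T (-1) ^ n) := by
    apply mul_right_cancel₀ hAn0
    rw [heq', hBn]
    ring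
  -- evaluate at u
  have hφ := congrArg (evalT u) heq2
  rw [evalT_invert u huinv] at hφ
  have hATeval : evalT u (T 1 - C ξ : LaurentPolynomial ℝ) = 0 := by
    rw [map_sub, evalT_T, evalT_C]
    simp [hucoe]
  have hAeval : evalT u ((T 1 - C ξ : LaurentPolynomial ℝ) ^ n) = 0 := by
    rw [map_pow, hATeval, zero_pow hpos.ne']
  rw [map_mul, map_add, map_mul, hAeval, mul_zero, add_zero, map_mul, map_pow, map_pow,
    evalT_C, evalT_T] at hφ
  have hval : ((u ^ (-1 : ℤ) : ℝˣ) : ℝ) = ξ := by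
    rw [zpow_neg, zpow_one, huinv, hucoe]
  rw [hval] at hφ
  have hn : (-ξ) ^ n = -ξ ^ n := hodd.neg_pow ξ
  have hξn : ξ ^ n * ξ ^ n = 1 := by
    rw [← mul_pow, hsq, one_pow]
  have hm1 : -ξ ^ n * ξ ^ n = -1 := by rw [neg_mul, hξn]
  have hzero : evalT u r = 0 := by
    rw [hn, hm1] at hφ
    linarith
  -- conclude divisibility
  obtain ⟨m, p, hp⟩ := exists_T_pow r
  have hpev : p.eval ξ = 0 := by
    have := congrArg (evalT u) hp
    rw [evalT_toLaurent, map_mul, hzero, zero_mul, hucoe] at this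
    exact this
  have hdvd : (Polynomial.X - Polynomial.C ξ) ∣ p :=
    Polynomial.dvd_iff_isRoot.mpr hpev
  have hdvdL : (T 1 - C ξ : LaurentPolynomial ℝ) ∣ Polynomial.toLaurent p := by
    have := map_dvd (Polynomial.toLaurent (R := ℝ)) hdvd
    rwa [map_sub, Polynomial.toLaurent_X, Polynomial.toLaurent_C] at this
  rw [hp] at hdvdL
  apply hr
  have : (T 1 - C ξ : LaurentPolynomial ℝ) ∣ r * T (m : ℤ) * T (-(m : ℤ)) :=
    hdvdL.mul_right _
  rwa [mul_T_assoc, add_neg_cancel, T_zero, mul_one] at this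
end

section
/- Let ξ ∈ S¹ with ξ ≠ ±1, n a positive integer, ε = ±1, and let R_ξ(t) = (t-ξ)(1 - conj(ξ)t⁻¹) ∈ ℝ[t^{±1}]. Then the pairing e(n,ε,ξ,ℝ) on M = ℝ[t^{±1}]/R_ξ(t)ⁿ given by (x,y) ↦ ε·x·y# / R_ξ(t)ⁿ ∈ ℝ(t)/ℝ[t^{±1}] is a well-defined, sesquilinear, Hermitian, non-singular linking form. -/
open LaurentPolynomial

/-- The real basic polynomial `R_ξ(t) = (t-ξ)(1-conj(ξ)t⁻¹) = t - 2Re(ξ) + t⁻¹` for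
`ξ ∈ S¹ ∖ {±1}`. -/
noncomputable def RxiR (ξ : ℂ) : LaurentPolynomial ℝ :=
  T 1 - C (2 * ξ.re) + T (-1)

/-- Representative-level formula for the basic pairing `e(n,ε,ξ,ℝ)`:
`(x, y) ↦ ε·x·y# / R_ξ(t)ⁿ`, computed in the fraction field `Q` of `ℝ[t^{±1}]`. -/
noncomputable def lamE (Q : Type*) [Field Q] [Algebra (LaurentPolynomial ℝ) Q]
    (ε : ℝ) (ξ : ℂ) (n : ℕ) (x y : LaurentPolynomial ℝ) : Q :=
  algebraMap (LaurentPolynomial ℝ) Q (C ε * (x * lstarR y)) *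
    (algebraMap (LaurentPolynomial ℝ) Q ((RxiR ξ) ^ n))⁻¹

lemma lstarR_add (a b : LaurentPolynomial ℝ) : lstarR (a + b) = lstarR a + lstarR b :=
  map_add _ _ _

lemma lstarR_mul (a b : LaurentPolynomial ℝ) : lstarR (a * b) = lstarR a * lstarR b :=
  map_mul _ _ _

lemma lstarR_lstarR (a : LaurentPolynomial ℝ) : lstarR (lstarR a) = a :=
  LaurentPolynomial.involutive_invert a

lemma lstarR_one : lstarR 1 = 1 := map_one _

lemma lstarR_C (c : ℝ) : lstarR (C c) = C c := LaurentPolynomial.invert_C c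

lemma lstarR_RxiR (ξ : ℂ) : lstarR (RxiR ξ) = RxiR ξ := by
  simp only [lstarR, RxiR, map_add, map_sub, invert_T, invert_C]
  ring

lemma lstarR_RxiR_pow (ξ : ℂ) (n : ℕ) : lstarR (RxiR ξ ^ n) = RxiR ξ ^ n := by
  simp only [lstarR, map_pow]
  rw [show (invert (RxiR ξ) : LaurentPolynomial ℝ) = RxiR ξ from lstarR_RxiR ξ]

lemma RxiR_ne_zero (ξ : ℂ) : RxiR ξ ≠ 0 := by
  intro h
  have := congrArg (fun p : LaurentPolynomial ℝ => p.coeff (1 : ℤ)) h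
  simp only [RxiR] at this
  erw [AddMonoidAlgebra.coeff_add, AddMonoidAlgebra.coeff_sub, Finsupp.add_apply, Finsupp.sub_apply] at this
  rw [LaurentPolynomial.T_apply, LaurentPolynomial.T_apply, LaurentPolynomial.C_apply] at this
  norm_num at this

/-- **The basic real pairing `e(n,ε,ξ,ℝ)` is a non-singular linking form.**
For `ξ ∈ S¹ ∖ {±1}`, `n > 0` and `ε = ±1`, the pairing `(x,y) ↦ ε·x·y#/R_ξ(t)ⁿ` on
`M = ℝ[t^{±1}]/R_ξ(t)ⁿ` with values in `ℝ(t)/ℝ[t^{±1}]` is well defined, sesquilinear,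
Hermitian and non-singular. -/
theorem basic_real_pairing_nonsingular_linking_form
    (Q : Type*) [Field Q] [Algebra (LaurentPolynomial ℝ) Q]
    [IsFractionRing (LaurentPolynomial ℝ) Q]
    (σ : Q →+* Q)
    (hσ : ∀ r : LaurentPolynomial ℝ,
      σ (algebraMap (LaurentPolynomial ℝ) Q r) = algebraMap (LaurentPolynomial ℝ) Q (lstarR r))
    (ξ : ℂ) (hξ : ‖ξ‖ = 1) (hξ1 : ξ ≠ 1) (hξ2 : ξ ≠ -1)
    (n : ℕ) (hn : 0 < n) (ε : ℝ) (hε : ε = 1 ∨ ε = -1) :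
    -- well-definedness on `ℝ[t^{±1}]/R_ξⁿ`
    (∀ x y z : LaurentPolynomial ℝ,
      (Submodule.Quotient.mk (lamE Q ε ξ n (x + RxiR ξ ^ n * z) y)
          : Q ⧸ LinearMap.range (Algebra.linearMap (LaurentPolynomial ℝ) Q))
        = Submodule.Quotient.mk (lamE Q ε ξ n x y) ∧
      (Submodule.Quotient.mk (lamE Q ε ξ n x (y + RxiR ξ ^ n * z))
          : Q ⧸ LinearMap.range (Algebra.linearMap (LaurentPolynomial ℝ) Q))
        = Submodule.Quotient.mk (lamE Q ε ξ n x y))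
    -- sesquilinearity
    ∧ (∀ x x' y : LaurentPolynomial ℝ,
        lamE Q ε ξ n (x + x') y = lamE Q ε ξ n x y + lamE Q ε ξ n x' y)
    ∧ (∀ x y y' : LaurentPolynomial ℝ,
        lamE Q ε ξ n x (y + y') = lamE Q ε ξ n x y + lamE Q ε ξ n x y')
    ∧ (∀ (r : LaurentPolynomial ℝ) (x y : LaurentPolynomial ℝ),
        lamE Q ε ξ n (r * x) y = algebraMap (LaurentPolynomial ℝ) Q r * lamE Q ε ξ n x y)
    ∧ (∀ (r : LaurentPolynomial ℝ) (x y : LaurentPolynomial ℝ),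
        lamE Q ε ξ n x (r * y)
          = algebraMap (LaurentPolynomial ℝ) Q (lstarR r) * lamE Q ε ξ n x y)
    -- Hermitian
    ∧ (∀ x y : LaurentPolynomial ℝ,
        (Submodule.Quotient.mk (lamE Q ε ξ n y x)
            : Q ⧸ LinearMap.range (Algebra.linearMap (LaurentPolynomial ℝ) Q))
          = Submodule.Quotient.mk (σ (lamE Q ε ξ n x y)))
    -- non-singularity: the adjoint is injective …
    ∧ (∀ x : LaurentPolynomial ℝ,
        (∀ y : LaurentPolynomial ℝ,
          (Submodule.Quotient.mk (lamE Q ε ξ n x y)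
              : Q ⧸ LinearMap.range (Algebra.linearMap (LaurentPolynomial ℝ) Q)) = 0) →
        RxiR ξ ^ n ∣ x)
    -- … and surjective onto the semilinear functionals of the quotient module
    ∧ (∀ f : LaurentPolynomial ℝ →
          Q ⧸ LinearMap.range (Algebra.linearMap (LaurentPolynomial ℝ) Q),
        (∀ y y', f (y + y') = f y + f y') →
        (∀ r y, f (r * y) = lstarR r • f y) →
        (∀ y z, f (y + RxiR ξ ^ n * z) = f y) →
        ∃ x : LaurentPolynomial ℝ, ∀ y : LaurentPolynomial ℝ,
          (Submodule.Quotient.mk (lamE Q ε ξ n x y)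
              : Q ⧸ LinearMap.range (Algebra.linearMap (LaurentPolynomial ℝ) Q)) = f y) := by
  have hinj : Function.Injective (algebraMap (LaurentPolynomial ℝ) Q) :=
    IsFractionRing.injective _ _
  set φ := algebraMap (LaurentPolynomial ℝ) Q with hφ
  have hRn0 : (RxiR ξ) ^ n ≠ 0 := pow_ne_zero _ (RxiR_ne_zero ξ)
  have hQR : φ ((RxiR ξ) ^ n) ≠ 0 := by
    intro h
    exact hRn0 (hinj (by rw [h, map_zero]))
  have hεε : C ε * C ε = (1 : LaurentPolynomial ℝ) := by
    rw [← map_mul]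
    rcases hε with h | h <;> simp [h]
  have hQR' : φ (RxiR ξ) ^ n ≠ 0 := by rw [← map_pow]; exact hQR
  have hcancel : ∀ w : LaurentPolynomial ℝ, φ ((RxiR ξ) ^ n * w) * (φ ((RxiR ξ) ^ n))⁻¹ = φ w := by
    intro w
    rw [map_mul]
    field_simp
  have hmem : ∀ w : LaurentPolynomial ℝ,
      φ w ∈ LinearMap.range (Algebra.linearMap (LaurentPolynomial ℝ) Q) := fun w => ⟨w, rfl⟩
  refine ⟨?_, ?_, ?_, ?_, ?_, ?_, ?_, ?_⟩
  · -- well-definedness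
    intro x y z
    constructor
    · rw [Submodule.Quotient.eq]
      have : lamE Q ε ξ n (x + RxiR ξ ^ n * z) y - lamE Q ε ξ n x y
          = φ (C ε * (z * lstarR y)) := by
        rw [← hcancel (C ε * (z * lstarR y))]
        simp only [lamE, ← hφ]
        rw [← sub_mul, ← map_sub]
        ring_nf
      rw [this]; exact hmem _
    · rw [Submodule.Quotient.eq]
      have : lamE Q ε ξ n x (y + RxiR ξ ^ n * z) - lamE Q ε ξ n x y
          = φ (C ε * (x * lstarR z)) := by
        rw [← hcancel (C ε * (x * lstarR z))]
        simp only [lamE, ← hφ, lstarR_add, lstarR_mul, lstarR_RxiR_pow]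
        rw [← sub_mul, ← map_sub]
        ring_nf
      rw [this]; exact hmem _
  · -- additivity in first variable
    intro x x' y
    simp only [lamE, ← hφ]
    rw [← add_mul, ← map_add]
    ring_nf
  · -- additivity in second variable
    intro x y y'
    simp only [lamE, ← hφ, lstarR_add]
    rw [← add_mul, ← map_add]
    ring_nf
  · -- linearity in first variable
    intro r x y
    simp only [lamE, ← hφ]
    rw [show C ε * (r * x * lstarR y) = r * (C ε * (x * lstarR y)) by ring, map_mul]
    ring
  · -- semilinearity in second variable
    intro r x y
    simp only [lamE, ← hφ, lstarR_mul]
    rw [show C ε * (x * (lstarR r * lstarR y)) = lstarR r * (C ε * (x * lstarR y)) by ring,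
      map_mul]
    ring
  · -- Hermitian
    intro x y
    congr 1
    have : σ (lamE Q ε ξ n x y) = lamE Q ε ξ n y x := by
      simp only [lamE, ← hφ]
      rw [map_mul, map_inv₀, hσ, hσ, lstarR_RxiR_pow]
      congr 1
      rw [lstarR_mul, lstarR_mul, lstarR_C, lstarR_lstarR]
      congr 1
      ring
    rw [this]
  · -- injectivity of adjoint
    intro x hx
    have h1 := hx 1
    rw [Submodule.Quotient.mk_eq_zero] at h1
    obtain ⟨r, hr⟩ := h1
    simp only [Algebra.linearMap_apply, ← hφ] at hr
    have : φ (r * RxiR ξ ^ n) = φ (C ε * (x * lstarR 1)) := by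
      rw [map_mul, hr, lamE, ← hφ]
      field_simp
    have hrx : r * RxiR ξ ^ n = C ε * x := by
      have := hinj this
      rwa [lstarR_one, mul_one] at this
    refine ⟨C ε * r, ?_⟩
    have : C ε * (r * RxiR ξ ^ n) = C ε * (C ε * x) := by rw [hrx]
    calc x = C ε * C ε * x := by rw [hεε, one_mul]
    _ = RxiR ξ ^ n * (C ε * r) := by rw [mul_assoc, ← this]; ring
  · -- surjectivity of adjoint
    intro f hadd hsmul hper
    have hf0 : f 0 = 0 := by
      have h2 := hadd 0 0
      rw [add_zero] at h2
      exact left_eq_add.mp h2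
    obtain ⟨q, hq⟩ := Submodule.Quotient.mk_surjective
      (LinearMap.range (Algebra.linearMap (LaurentPolynomial ℝ) Q)) (f 1)
    have hRf : RxiR ξ ^ n • f 1 = 0 := by
      have h1 : f (RxiR ξ ^ n) = 0 := by
        have := hper 0 1
        rw [mul_one, zero_add] at this
        rw [this, hf0]
      have h2 : f (RxiR ξ ^ n * 1) = lstarR (RxiR ξ ^ n) • f 1 := hsmul _ 1
      rw [mul_one, lstarR_RxiR_pow] at h2
      rw [← h2, h1]
    have hmemq : RxiR ξ ^ n • q ∈ LinearMap.range (Algebra.linearMap (LaurentPolynomial ℝ) Q) := by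
      rw [← Submodule.Quotient.mk_eq_zero, Submodule.Quotient.mk_smul, hq, hRf]
    obtain ⟨p, hp⟩ := hmemq
    simp only [Algebra.linearMap_apply, ← hφ] at hp
    have hpq : φ p * (φ (RxiR ξ ^ n))⁻¹ = q := by
      rw [hp, Algebra.smul_def, ← hφ]
      field_simp
    refine ⟨C ε * p, fun y => ?_⟩
    have hfy : f y = lstarR y • f 1 := by
      have := hsmul y 1
      rwa [mul_one] at this
    have hlam : lamE Q ε ξ n (C ε * p) y = lstarR y • q := by
      rw [lamE, ← hφ, Algebra.smul_def, ← hφ, ← hpq]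
      rw [show C ε * (C ε * p * lstarR y) = (C ε * C ε) * (lstarR y * p) by ring, hεε, one_mul,
        map_mul]
      ring
    rw [hlam, Submodule.Quotient.mk_smul, hq, hfy]
end

section
/- Let ξ ∈ S¹ ⊂ ℂ and let n = 2m be an even positive integer. The linking form e(n,ε,ξ,ℂ) on H = ℂ[t^{±1}]/(t-ξ)^{2m}, defined by (x,y) ↦ ε·x·y#/((t-ξ)^m(t⁻¹-conj(ξ))^m), is metabolic: L = (t-ξ)^m·H satisfies L = L^⊥. -/
open LaurentPolynomial Complex

/-- Representative-level formula for the basic pairing `e(2m,ε,ξ,ℂ)`: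
`(x, y) ↦ ε·x·y# / ((t-ξ)^m (t⁻¹-conj ξ)^m)`, computed in the fraction field `Q` of
`ℂ[t^{±1}]`.  Note that `(t⁻¹ - conj ξ) = (t - ξ)#`. -/
noncomputable def lamEC (Q : Type*) [Field Q] [Algebra (LaurentPolynomial ℂ) Q]
    (ε : ℝ) (ξ : ℂ) (m : ℕ) (x y : LaurentPolynomial ℂ) : Q :=
  algebraMap (LaurentPolynomial ℂ) Q (C (ε : ℂ) * (x * lstar y)) *
    (algebraMap (LaurentPolynomial ℂ) Q
      ((T 1 - C ξ) ^ m * (lstar (T 1 - C ξ)) ^ m))⁻¹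

/-- Coefficientwise conjugation on Laurent polynomials. -/
noncomputable def conjMap (p : LaurentPolynomial ℂ) : LaurentPolynomial ℂ :=
  AddMonoidAlgebra.ofCoeff (Finsupp.mapRange (starRingEnd ℂ) (map_zero _) p.coeff)

lemma conjMap_add (p q : LaurentPolynomial ℂ) : conjMap (p + q) = conjMap p + conjMap q :=
  congrArg AddMonoidAlgebra.ofCoeff (Finsupp.mapRange_add (map_add _) p.coeff q.coeff)

lemma conjMap_single (n : ℤ) (a : ℂ) :
    conjMap (AddMonoidAlgebra.single n a) = AddMonoidAlgebra.single n (starRingEnd ℂ a) :=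
  congrArg AddMonoidAlgebra.ofCoeff Finsupp.mapRange_single

lemma conjMap_mul (p q : LaurentPolynomial ℂ) : conjMap (p * q) = conjMap p * conjMap q := by
  induction p using AddMonoidAlgebra.induction_linear with
  | zero => simp [conjMap, Finsupp.mapRange_zero]
  | add f g hf hg => rw [add_mul, conjMap_add, conjMap_add, hf, hg, add_mul]
  | single n a =>
    induction q using AddMonoidAlgebra.induction_linear with
    | zero => simp [conjMap, Finsupp.mapRange_zero]
    | add f g hf hg => rw [mul_add, conjMap_add, conjMap_add, hf, hg, mul_add]
    | single k b =>
      rw [AddMonoidAlgebra.single_mul_single, conjMap_single, conjMap_single, conjMap_single,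
        AddMonoidAlgebra.single_mul_single, map_mul]

lemma lstar_eq (p : LaurentPolynomial ℂ) : lstar p = conjMap (LaurentPolynomial.invert p) := rfl

lemma lstar_one : lstar 1 = 1 := by
  have h : (1 : LaurentPolynomial ℂ) = AddMonoidAlgebra.single (0 : ℤ) (1 : ℂ) := rfl
  rw [lstar_eq, map_one, h, conjMap_single, map_one]

lemma lstar_pow (p : LaurentPolynomial ℂ) (m : ℕ) : lstar (p ^ m) = (lstar p) ^ m := by
  induction m with
  | zero => simpa using lstar_one
  | succ k ih => rw [pow_succ, pow_succ, lstar_mul, ih]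

lemma lstar_injective : Function.Injective lstar := by
  intro p q h
  have h1 : Function.Injective conjMap := fun a b hab =>
    AddMonoidAlgebra.coeff_injective (Finsupp.mapRange_injective _ _ (RingHom.injective _)
      (AddMonoidAlgebra.ofCoeff_injective hab))
  exact (LaurentPolynomial.invert (R := ℂ)).injective (h1 h)

lemma Tsub_ne_zero (ξ : ℂ) : (T 1 - C ξ : LaurentPolynomial ℂ) ≠ 0 := by
  intro h
  have h1 := congrArg (fun p : LaurentPolynomial ℂ => p.coeff 1) h
  simp only [AddMonoidAlgebra.coeff_zero, Finsupp.coe_zero, Pi.zero_apply] at h1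
  rw [show (T 1 - C ξ : LaurentPolynomial ℂ).coeff 1
      = (T 1 : LaurentPolynomial ℂ).coeff 1 - (C ξ : LaurentPolynomial ℂ).coeff 1 from rfl,
    show (T 1 : LaurentPolynomial ℂ) = AddMonoidAlgebra.single (1 : ℤ) (1 : ℂ) from rfl,
    show (C ξ : LaurentPolynomial ℂ) = AddMonoidAlgebra.single (0 : ℤ) ξ from rfl] at h1
  simp [AddMonoidAlgebra.coeff_single, Finsupp.single_apply] at h1

/-- **The basic complex pairing `e(2m,ε,ξ,ℂ)` of even order is metabolic.**
For `ξ ∈ S¹` and `n = 2m` even and positive, the submodule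
`L = (t-ξ)^m·H` of `H = ℂ[t^{±1}]/(t-ξ)^{2m}` satisfies `L = L^⊥`: a class `[x]` lies in
`L`, i.e. `(t-ξ)^m ∣ x`, if and only if it pairs to zero with all of `L`. -/
theorem basic_complex_pairing_even_metabolic
    (Q : Type*) [Field Q] [Algebra (LaurentPolynomial ℂ) Q]
    [IsFractionRing (LaurentPolynomial ℂ) Q]
    (ξ : ℂ) (hξ : ‖ξ‖ = 1) (m : ℕ) (hm : 0 < m) (ε : ℝ) (hε : ε = 1 ∨ ε = -1) :
    ∀ x : LaurentPolynomial ℂ,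
      ((T 1 - C ξ) ^ m ∣ x ↔
        ∀ y : LaurentPolynomial ℂ, (T 1 - C ξ) ^ m ∣ y →
          (Submodule.Quotient.mk (lamEC Q ε ξ m x y)
              : Q ⧸ LinearMap.range (Algebra.linearMap (LaurentPolynomial ℂ) Q)) = 0) := by
  set u : LaurentPolynomial ℂ := T 1 - C ξ with hu_def
  have hu : u ≠ 0 := Tsub_ne_zero ξ
  have hlu : lstar u ≠ 0 := fun h => hu (lstar_injective (h.trans lstar_zero.symm))
  have inj : Function.Injective (algebraMap (LaurentPolynomial ℂ) Q) :=
    IsFractionRing.injective _ _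
  have hB : u ^ m * (lstar u) ^ m ≠ 0 := mul_ne_zero (pow_ne_zero _ hu) (pow_ne_zero _ hlu)
  have hBQ : algebraMap (LaurentPolynomial ℂ) Q (u ^ m * (lstar u) ^ m) ≠ 0 := fun h =>
    hB (inj (h.trans (map_zero _).symm))
  -- key reformulation: the class vanishes iff the denominator divides the numerator
  have key : ∀ x y : LaurentPolynomial ℂ,
      ((Submodule.Quotient.mk (lamEC Q ε ξ m x y)
          : Q ⧸ LinearMap.range (Algebra.linearMap (LaurentPolynomial ℂ) Q)) = 0)
        ↔ u ^ m * (lstar u) ^ m ∣ x * lstar y := by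
    intro x y
    rw [Submodule.Quotient.mk_eq_zero]
    have hdvd : (u ^ m * (lstar u) ^ m ∣ C (ε : ℂ) * (x * lstar y))
        ↔ u ^ m * (lstar u) ^ m ∣ x * lstar y := by
      rcases hε with h | h <;> subst h
      · norm_num
      · push_cast
        rw [map_neg, map_one, neg_one_mul, dvd_neg]
    rw [← hdvd]
    constructor
    · rintro ⟨c, hc⟩
      simp only [Algebra.linearMap_apply] at hc
      have hc2 : algebraMap (LaurentPolynomial ℂ) Q (C (ε : ℂ) * (x * lstar y))
          = algebraMap (LaurentPolynomial ℂ) Q (c * (u ^ m * (lstar u) ^ m)) := by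
        rw [lamEC, ← hu_def, eq_comm, mul_inv_eq_iff_eq_mul₀ hBQ] at hc
        rw [hc]; simp [map_mul]
      exact Dvd.intro_left c (inj hc2).symm
    · rintro ⟨c, hc⟩
      refine ⟨c, ?_⟩
      simp only [Algebra.linearMap_apply]
      rw [lamEC, ← hu_def, hc, map_mul, mul_comm (algebraMap _ Q (u ^ m * (lstar u) ^ m)),
        mul_assoc, mul_inv_cancel₀ hBQ, mul_one]
  intro x
  constructor
  · rintro ⟨c, rfl⟩ y ⟨d, rfl⟩
    rw [key]
    exact ⟨c * lstar d, by rw [lstar_mul, lstar_pow]; ring⟩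
  · intro h
    obtain ⟨c, hc⟩ := (key x (u ^ m)).mp (h (u ^ m) ⟨1, (mul_one _).symm⟩)
    rw [lstar_pow] at hc
    refine ⟨c, mul_right_cancel₀ (pow_ne_zero m hlu) ?_⟩
    rw [hc]; ring
end

section
/- Let F = ℝ or ℂ and let (M, λ) be a linking form over F[t^{±1}] whose primary part M_p and M_{p#} are both nonzero, where p is an irreducible polynomial that is NOT weakly symmetric (p is not a unit multiple of p#). Then the restriction of λ to M_p ⊕ M_{p#} is metabolic, with both M_p and M_{p#} serving as metabolizers. -/
open LaurentPolynomial

/-- The involution `#` on Laurent polynomials over `𝔽 = ℝ, ℂ`: `t ↦ t⁻¹` together with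
conjugation of the coefficients. -/
noncomputable def lstarF {𝔽 : Type*} [RCLike 𝔽] (p : LaurentPolynomial 𝔽) :
    LaurentPolynomial 𝔽 :=
  AddMonoidAlgebra.ofCoeff
    (Finsupp.mapRange (starRingEnd 𝔽) (map_zero _) (LaurentPolynomial.invert p).coeff)

/-- The quotient `Q/R` where `R = 𝔽[t^{±1}]` and `Q` is its field of fractions. -/
abbrev QRmod (𝔽 : Type*) [RCLike 𝔽] (Q : Type*) [Field Q]
    [Algebra (LaurentPolynomial 𝔽) Q] : Type _ :=
  Q ⧸ LinearMap.range (Algebra.linearMap (LaurentPolynomial 𝔽) Q)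

/-- The `p`-primary part `M_p = {x ∈ M : pⁿ·x = 0 for some n}` of a module `M`. -/
noncomputable def primaryPart {𝔽 : Type*} [RCLike 𝔽] (M : Type*) [AddCommGroup M]
    [Module (LaurentPolynomial 𝔽) M] (p : LaurentPolynomial 𝔽) :
    Submodule (LaurentPolynomial 𝔽) M :=
  ⨆ n : ℕ, Submodule.torsionBy (LaurentPolynomial 𝔽) M (p ^ n)

section aux
variable {𝔽 : Type*} [RCLike 𝔽]

lemma lstarF_apply (q : LaurentPolynomial 𝔽) (n : ℤ) :
    (lstarF q).coeff n = (starRingEnd 𝔽) (q.coeff (-n)) := by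
  rw [← LaurentPolynomial.invert_apply]; rfl

lemma lstarF_invol (q : LaurentPolynomial 𝔽) : lstarF (lstarF q) = q := by
  ext n
  simp [lstarF_apply, RCLike.conj_conj]

/-- The conjugation-of-coefficients ring hom on Laurent polynomials. -/
noncomputable def conjLaurent : LaurentPolynomial 𝔽 →+* LaurentPolynomial 𝔽 :=
  AddMonoidAlgebra.liftNCRingHom
    (AddMonoidAlgebra.singleZeroRingHom.comp (starRingEnd 𝔽))
    (AddMonoidAlgebra.of 𝔽 ℤ) (fun _ _ => Commute.all _ _)

lemma conjLaurent_eq (q : LaurentPolynomial 𝔽) :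
    conjLaurent q =
      AddMonoidAlgebra.ofCoeff (Finsupp.mapRange (starRingEnd 𝔽) (map_zero _) q.coeff) := by
  induction q using AddMonoidAlgebra.induction_linear with
  | zero => simp
  | add x y hx hy =>
      rw [map_add, hx, hy, AddMonoidAlgebra.coeff_add, Finsupp.mapRange_add (map_add _),
        AddMonoidAlgebra.ofCoeff_add]
  | single a b =>
      rw [AddMonoidAlgebra.coeff_single, Finsupp.mapRange_single]
      show AddMonoidAlgebra.liftNC _ _ (AddMonoidAlgebra.single a b) = _
      rw [AddMonoidAlgebra.liftNC_single]
      show AddMonoidAlgebra.single 0 ((starRingEnd 𝔽) b) *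
        AddMonoidAlgebra.single a 1 = _
      rw [AddMonoidAlgebra.single_mul_single, zero_add, mul_one]
      rfl

lemma lstarF_eq (q : LaurentPolynomial 𝔽) :
    lstarF q = conjLaurent (LaurentPolynomial.invert q) := by
  rw [conjLaurent_eq]; rfl

lemma lstarF_mul (a b : LaurentPolynomial 𝔽) :
    lstarF (a * b) = lstarF a * lstarF b := by
  simp [lstarF_eq, map_mul]

lemma lstarF_pow (a : LaurentPolynomial 𝔽) (n : ℕ) :
    lstarF (a ^ n) = (lstarF a) ^ n := by
  induction n with
  | zero => simp [lstarF_eq]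
  | succ n ih => rw [pow_succ, lstarF_mul, ih, pow_succ]

lemma lstarF_dvd {a b : LaurentPolynomial 𝔽} (h : a ∣ b) : lstarF a ∣ lstarF b := by
  obtain ⟨c, rfl⟩ := h
  exact ⟨lstarF c, lstarF_mul a c⟩

instance laurent_pid : IsPrincipalIdealRing (LaurentPolynomial 𝔽) := by
  haveI := LaurentPolynomial.isLocalization (R := 𝔽)
  constructor
  intro J
  obtain ⟨a, ha⟩ :=
    (IsPrincipalIdealRing.principal
      (J.comap (algebraMap (Polynomial 𝔽) (LaurentPolynomial 𝔽)))).principal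
  have hmap := IsLocalization.map_comap (Submonoid.powers (Polynomial.X : Polynomial 𝔽))
    (LaurentPolynomial 𝔽) J
  refine ⟨⟨algebraMap (Polynomial 𝔽) (LaurentPolynomial 𝔽) a, ?_⟩⟩
  rw [← hmap, Ideal.under, ha]
  show Ideal.map _ (Ideal.span {a}) = _
  rw [Ideal.map_span, Set.image_singleton]
end aux


section aux2
variable {𝔽 : Type*} [RCLike 𝔽] {M : Type*} [AddCommGroup M]
  [Module (LaurentPolynomial 𝔽) M]

lemma mem_primaryPart_iff {q : LaurentPolynomial 𝔽} {x : M} :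
    x ∈ primaryPart M q ↔ ∃ n : ℕ, q ^ n • x = 0 := by
  have hdir : Directed (· ≤ ·)
      (fun n : ℕ => Submodule.torsionBy (LaurentPolynomial 𝔽) M (q ^ n)) := by
    intro i j
    exact ⟨max i j,
      Submodule.torsionBy_le_torsionBy_of_dvd _ _ (pow_dvd_pow q (le_max_left i j)),
      Submodule.torsionBy_le_torsionBy_of_dvd _ _ (pow_dvd_pow q (le_max_right i j))⟩
  rw [primaryPart, Submodule.mem_iSup_of_directed _ hdir]
  simp [Submodule.mem_torsionBy_iff]

lemma qrmod_eq_zero {Q : Type*} [Field Q] [Algebra (LaurentPolynomial 𝔽) Q]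
    {r s : LaurentPolynomial 𝔽} (hco : IsCoprime r s) {z : QRmod 𝔽 Q}
    (hr : r • z = 0) (hs : s • z = 0) : z = 0 := by
  obtain ⟨a, b, hab⟩ := hco
  calc z = (1 : LaurentPolynomial 𝔽) • z := (one_smul _ z).symm
    _ = (a * r + b * s) • z := by rw [hab]
    _ = a • (r • z) + b • (s • z) := by rw [add_smul, mul_smul, mul_smul]
    _ = 0 := by rw [hr, hs, smul_zero, smul_zero, add_zero]
end aux2

instance laurent_isDomain {𝔽 : Type*} [RCLike 𝔽] : IsDomain (LaurentPolynomial 𝔽) :=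
  NoZeroDivisors.to_isDomain _

lemma lstarF_zero {𝔽 : Type*} [RCLike 𝔽] : lstarF (0 : LaurentPolynomial 𝔽) = 0 := by
  ext n; simp [lstarF_apply]


/-- **Non weakly symmetric primary parts give metabolic summands.**  Let `(M, λ)` be a
linking form over `𝔽[t^{±1}]`, and let `p` be irreducible and not weakly symmetric
(`p` not associated to `p#`), with `M_p ≠ 0 ≠ M_{p#}`.  If the restriction of `λ` to
`N = M_p ⊕ M_{p#}` is non-degenerate (hence non-singular), then it is metabolic: both
`M_p` and `M_{p#}` are equal to their own orthogonal complements inside `N`. -/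
theorem primary_parts_are_metabolizers
    {𝔽 : Type*} [RCLike 𝔽] (Q : Type*) [Field Q] [Algebra (LaurentPolynomial 𝔽) Q]
    [IsFractionRing (LaurentPolynomial 𝔽) Q]
    (σ : Q →+* Q)
    (hσ : ∀ r : LaurentPolynomial 𝔽,
      σ (algebraMap (LaurentPolynomial 𝔽) Q r) = algebraMap (LaurentPolynomial 𝔽) Q (lstarF r))
    (M : Type*) [AddCommGroup M] [Module (LaurentPolynomial 𝔽) M]
    [Module.Finite (LaurentPolynomial 𝔽) M]
    (htors : ∀ x : M, ∃ r : LaurentPolynomial 𝔽, r ≠ 0 ∧ r • x = 0)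
    (lam : M → M → QRmod 𝔽 Q)
    (hadd₁ : ∀ x x' y : M, lam (x + x') y = lam x y + lam x' y)
    (hadd₂ : ∀ x y y' : M, lam x (y + y') = lam x y + lam x y')
    (hsmul₁ : ∀ (r : LaurentPolynomial 𝔽) (x y : M), lam (r • x) y = r • lam x y)
    (hsmul₂ : ∀ (r : LaurentPolynomial 𝔽) (x y : M), lam x (r • y) = lstarF r • lam x y)
    (hherm : ∀ x y : M, ∃ qq : Q, lam x y = Submodule.Quotient.mk qq ∧
        lam y x = Submodule.Quotient.mk (σ qq))
    (p : LaurentPolynomial 𝔽) (hp : Irreducible p)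
    (hnws : ¬ Associated p (lstarF p))
    (hMp : primaryPart M p ≠ ⊥) (hMps : primaryPart M (lstarF p) ≠ ⊥)
    (hnd : ∀ x ∈ primaryPart M p ⊔ primaryPart M (lstarF p),
      (∀ y ∈ primaryPart M p ⊔ primaryPart M (lstarF p), lam x y = 0) → x = 0) :
    (∀ x ∈ primaryPart M p ⊔ primaryPart M (lstarF p),
      (x ∈ primaryPart M p ↔ ∀ y ∈ primaryPart M p, lam x y = 0))
    ∧ (∀ x ∈ primaryPart M p ⊔ primaryPart M (lstarF p),
      (x ∈ primaryPart M (lstarF p) ↔ ∀ y ∈ primaryPart M (lstarF p), lam x y = 0)) := by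
  -- coprimality of `p` and `p#`
  have hps : ¬ p ∣ lstarF p := by
    intro hdvd
    have h2 := lstarF_dvd hdvd
    rw [lstarF_invol] at h2
    exact hnws (associated_of_dvd_dvd hdvd h2)
  have hcop : IsCoprime p (lstarF p) := hp.coprime_iff_not_dvd.mpr hps
  -- basic vanishing lemmas
  have lam_zero_left : ∀ y : M, lam 0 y = 0 := by
    intro y
    have := hsmul₁ 0 0 y
    rwa [zero_smul, zero_smul] at this
  have lam_zero_right : ∀ x : M, lam x 0 = 0 := by
    intro x
    have := hsmul₂ 0 x 0
    rwa [zero_smul, lstarF_zero, zero_smul] at this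
  -- isotropy of the primary parts
  have isoP : ∀ x ∈ primaryPart M p, ∀ y ∈ primaryPart M p, lam x y = 0 := by
    intro x hx y hy
    obtain ⟨n, hn⟩ := mem_primaryPart_iff.mp hx
    obtain ⟨m, hm⟩ := mem_primaryPart_iff.mp hy
    refine qrmod_eq_zero (hcop.pow (m := n) (n := m)) ?_ ?_
    · have := hsmul₁ (p ^ n) x y
      rw [hn, lam_zero_left] at this
      exact this.symm
    · have := hsmul₂ (p ^ m) x y
      rw [hm, lam_zero_right, lstarF_pow] at this
      exact this.symm
  have isoS : ∀ x ∈ primaryPart M (lstarF p), ∀ y ∈ primaryPart M (lstarF p),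
      lam x y = 0 := by
    intro x hx y hy
    obtain ⟨n, hn⟩ := mem_primaryPart_iff.mp hx
    obtain ⟨m, hm⟩ := mem_primaryPart_iff.mp hy
    refine qrmod_eq_zero (hcop.symm.pow (m := n) (n := m)) ?_ ?_
    · have := hsmul₁ ((lstarF p) ^ n) x y
      rw [hn, lam_zero_left] at this
      exact this.symm
    · have := hsmul₂ ((lstarF p) ^ m) x y
      rw [hm, lam_zero_right, lstarF_pow, lstarF_invol] at this
      exact this.symm
  constructor
  · intro x hxN
    constructor
    · intro hxp y hy
      exact isoP x hxp y hy
    · intro h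
      obtain ⟨a, ha, b, hb, rfl⟩ := Submodule.mem_sup.mp hxN
      have hb0 : b = 0 := by
        refine hnd b (Submodule.mem_sup_right hb) ?_
        intro y hyN
        obtain ⟨yp, hyp, ys, hys, rfl⟩ := Submodule.mem_sup.mp hyN
        rw [hadd₂]
        have h1 : lam b yp = 0 := by
          have hsum := hadd₁ a b yp
          rw [h yp hyp, isoP a ha yp hyp, zero_add] at hsum
          exact hsum.symm
        rw [h1, isoS b hb ys hys, add_zero]
      rw [hb0, add_zero]
      exact ha
  · intro x hxN
    constructor
    · intro hxs y hy
      exact isoS x hxs y hy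
    · intro h
      obtain ⟨a, ha, b, hb, rfl⟩ := Submodule.mem_sup.mp hxN
      have ha0 : a = 0 := by
        refine hnd a (Submodule.mem_sup_left ha) ?_
        intro y hyN
        obtain ⟨yp, hyp, ys, hys, rfl⟩ := Submodule.mem_sup.mp hyN
        rw [hadd₂]
        have h2 : lam a ys = 0 := by
          have hsum := hadd₁ a b ys
          rw [h ys hys, isoS b hb ys hys, add_zero] at hsum
          exact hsum.symm
        rw [h2, isoP a ha yp hyp, add_zero]
      rw [ha0, zero_add]
      exact hb
end
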